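/- Let k be a field, A a commutative unital k-algebra, L a solvable Lie algebra over k, and J an ideal of the ring A. Then the reduced algebra — the quotient of A ⊗[k] L by the Lie ideal spanned by the pure tensors j ⊗ x with j ∈ J and x ∈ L — is a solvable Lie algebra. -/

import Mathlib

open scoped TensorProduct

/-- The expanded Lie algebra `A ⊗[k] L` is a Lie algebra over `k` (not just over `A`). -/
noncomputable instance expandedLieAlgebra (k A L : Type*) [Field k] [CommRing A] [Algebra k A]
    [LieRing L] [LieAlgebra k L] : LieAlgebra k (A ⊗[k] L) where
  lie_smul c x y := by
    rw [← algebraMap_smul A c y, lie_smul, algebraMap_smul]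

section Aux

variable (k A L : Type*) [Field k] [CommRing A] [Algebra k A]
    [LieRing L] [LieAlgebra k L]

/-- Restrict scalars of a Lie ideal of `A ⊗[k] L` (over `A`) to a Lie ideal over `k`. -/
def lieIdealRestrict (N : LieIdeal A (A ⊗[k] L)) : LieIdeal k (A ⊗[k] L) :=
  { toSubmodule := N.toSubmodule.restrictScalars k
    lie_mem := fun h => N.lie_mem h }

@[simp] lemma mem_lieIdealRestrict {N : LieIdeal A (A ⊗[k] L)} {x : A ⊗[k] L} :
    x ∈ lieIdealRestrict k A L N ↔ x ∈ N := Iff.rfl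

lemma derivedSeries_le_restrict (n : ℕ) :
    LieAlgebra.derivedSeries k (A ⊗[k] L) n ≤
      lieIdealRestrict k A L (LieAlgebra.derivedSeries A (A ⊗[k] L) n) := by
  induction n with
  | zero => intro x _; trivial
  | succ n ih =>
    rw [LieAlgebra.derivedSeries_def, LieAlgebra.derivedSeriesOfIdeal_succ,
      LieSubmodule.lieIdeal_oper_eq_span, LieSubmodule.lieSpan_le]
    rintro m ⟨⟨x, hx⟩, ⟨y, hy⟩, rfl⟩
    have h : ⁅x, y⁆ ∈ LieAlgebra.derivedSeries A (A ⊗[k] L) (n + 1) := by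
      rw [LieAlgebra.derivedSeries_def, LieAlgebra.derivedSeriesOfIdeal_succ]
      exact LieSubmodule.lie_mem_lie (ih hx) (ih hy)
    exact h

lemma derivedSeries_expanded_eq (n : ℕ) :
    LieAlgebra.derivedSeries A (A ⊗[k] L) n =
      (LieAlgebra.derivedSeries k L n).baseChange A := by
  induction n with
  | zero =>
    simp only [LieAlgebra.derivedSeries_def, LieAlgebra.derivedSeriesOfIdeal_zero,
      LieSubmodule.baseChange_top]
  | succ n ih =>
    simp only [LieAlgebra.derivedSeries_def, LieAlgebra.derivedSeriesOfIdeal_succ] at ih ⊢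
    rw [LieSubmodule.lie_baseChange, ih]

instance expanded_isSolvable [LieAlgebra.IsSolvable L] :
    LieAlgebra.IsSolvable (A ⊗[k] L) := by
  obtain ⟨n, hn⟩ := LieAlgebra.IsSolvable.solvable k L
  refine (LieAlgebra.isSolvable_iff k _).mpr ⟨n, ?_⟩
  have h1 : LieAlgebra.derivedSeries A (A ⊗[k] L) n = ⊥ := by
    rw [derivedSeries_expanded_eq, hn, LieSubmodule.baseChange_bot]
  refine le_bot_iff.mp ?_
  refine le_trans (derivedSeries_le_restrict k A L n) ?_
  rw [h1]
  intro x hx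
  simpa using hx

end Aux

/-- The reduced algebra `(A ⊗[k] L) / (J ⊗ L)` of the expansion of a solvable Lie algebra is
solvable. -/
theorem reduced_algebra_of_solvable_isSolvable
    (k A L : Type*) [Field k] [CommRing A] [Algebra k A]
    [LieRing L] [LieAlgebra k L] [LieAlgebra.IsSolvable L]
    (J : Ideal A) (I : LieIdeal k (A ⊗[k] L))
    (hI : I.toSubmodule = Submodule.span k {t : A ⊗[k] L | ∃ j x, j ∈ J ∧ t = j ⊗ₜ[k] x}) :
    LieAlgebra.IsSolvable ((A ⊗[k] L) ⧸ I) := by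
  let f : (A ⊗[k] L) →ₗ⁅k⁆ (A ⊗[k] L) ⧸ I :=
    { toLinearMap := (I : Submodule k (A ⊗[k] L)).mkQ
      map_lie' := fun {x y} => rfl }
  have hf : Function.Surjective f := Submodule.mkQ_surjective _
  exact hf.lieAlgebra_isSolvable
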